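/- Let A and V be d×d symmetric positive definite matrices, θ ∈ [0,1], h > 0, b ∈ ℝ^d; set B = V^{1/2}AV^{1/2}, W = I + (θ−½)(h/2)B, and W̃ = I + (θ−½)(h/2)AV, and assume I + (θh/2)B and W are invertible. Define M = (2/h)V^{−1/2}W(I + (θh/2)B)V^{−1/2}, N = (2/h)V^{−1/2}W(I − ((1−θ)h/2)B)V^{−1/2}, 𝒜 = V^{−1/2}WBV^{−1/2}, β = V^{−1/2}WV^{1/2}b. Then: M − N = 𝒜 = W̃A; β = W̃b; M is invertible with M⁻¹N = G := (I + (θh/2)VA)⁻¹(I − ((1−θ)h/2)VA); M⁻¹β = (h/2)(I + (θh/2)VA)⁻¹Vb; M⁻¹(Mᵀ+N)M⁻ᵀ = Σ := h(I + (θh/2)VA)⁻¹V(I + (θh/2)AV)⁻¹; and GΣ is symmetric. -/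

import Mathlib

open Matrix

open scoped ComplexOrder in
/-- The positive semidefinite square root, as `Matrix.PosSemidef.sqrt` was defined in Mathlib
(December 2024); it has since been removed from Mathlib. -/
noncomputable def Matrix.PosSemidef.sqrt {n 𝕜 : Type*} [Fintype n] [RCLike 𝕜] [DecidableEq n]
    {A : Matrix n n 𝕜} (hA : A.PosSemidef) : Matrix n n 𝕜 :=
  hA.1.eigenvectorUnitary.1 * diagonal ((↑) ∘ Real.sqrt ∘ hA.1.eigenvalues) *
    (star hA.1.eigenvectorUnitary : Matrix n n 𝕜)

/-- (Theorem: the general discretized Langevin proposal corresponds to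
a matrix splitting.)  With `B = V^{1/2} A V^{1/2}`, `W = I + (θ-½)(h/2)B`,
`W̃ = I + (θ-½)(h/2)AV`, the matrices `M = (2/h)V^{-1/2}W(I + (θh/2)B)V^{-1/2}`,
`N = (2/h)V^{-1/2}W(I - ((1-θ)h/2)B)V^{-1/2}`, `𝒜 = V^{-1/2}WBV^{-1/2}`,
`β = V^{-1/2}WV^{1/2}b` satisfy the listed identities, and `GΣ` is symmetric. -/
theorem general_langevin_matrix_splitting
    {d : ℕ} (A V : Matrix (Fin d) (Fin d) ℝ) (hA : A.PosDef) (hV : V.PosDef)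
    (θ h : ℝ) (hθ : θ ∈ Set.Icc (0 : ℝ) 1) (hh : 0 < h) (b : Fin d → ℝ) :
    (let sqrtV : Matrix (Fin d) (Fin d) ℝ := hV.posSemidef.sqrt
     let B : Matrix (Fin d) (Fin d) ℝ := sqrtV * A * sqrtV
     let W : Matrix (Fin d) (Fin d) ℝ := 1 + ((θ - 1/2) * (h/2)) • B
     let Wt : Matrix (Fin d) (Fin d) ℝ := 1 + ((θ - 1/2) * (h/2)) • (A * V)
     ∀ _ : IsUnit (1 + (θ * h / 2) • B).det,
     ∀ _ : IsUnit W.det,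
     (let M : Matrix (Fin d) (Fin d) ℝ :=
        (2 / h) • (sqrtV⁻¹ * (W * (1 + (θ * h / 2) • B)) * sqrtV⁻¹)
      let N : Matrix (Fin d) (Fin d) ℝ :=
        (2 / h) • (sqrtV⁻¹ * (W * (1 - ((1 - θ) * h / 2) • B)) * sqrtV⁻¹)
      let 𝒜 : Matrix (Fin d) (Fin d) ℝ := sqrtV⁻¹ * (W * B) * sqrtV⁻¹
      let β : Fin d → ℝ := (sqrtV⁻¹ * (W * sqrtV)) *ᵥ b
      let G : Matrix (Fin d) (Fin d) ℝ :=
        (1 + (θ * h / 2) • (V * A))⁻¹ * (1 - ((1 - θ) * h / 2) • (V * A))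
      let Sig : Matrix (Fin d) (Fin d) ℝ :=
        h • ((1 + (θ * h / 2) • (V * A))⁻¹ * V * (1 + (θ * h / 2) • (A * V))⁻¹)
      M - N = 𝒜 ∧
      𝒜 = Wt * A ∧
      β = Wt *ᵥ b ∧
      IsUnit M.det ∧
      M⁻¹ * N = G ∧
      M⁻¹ *ᵥ β = (h / 2) • ((1 + (θ * h / 2) • (V * A))⁻¹ *ᵥ (V *ᵥ b)) ∧
      M⁻¹ * (Mᵀ + N) * M⁻¹ᵀ = Sig ∧
      (G * Sig).IsSymm)) := by
  intro S B W Wt hU hWu M N 𝒜 β G Sig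
  have hh' : h ≠ 0 := ne_of_gt hh
  -- defining equations for the `let`-bound variables
  have hB : B = S * A * S := rfl
  have hW0 : W = 1 + ((θ - 1/2) * (h/2)) • B := rfl
  have hWt : Wt = 1 + ((θ - 1/2) * (h/2)) • (A * V) := rfl
  set P : Matrix (Fin d) (Fin d) ℝ := 1 + (θ * h / 2) • B with hPdef
  set Q : Matrix (Fin d) (Fin d) ℝ := 1 - ((1 - θ) * h / 2) • B with hQdef
  have hM : M = (2/h) • (S⁻¹ * (W * P) * S⁻¹) := rfl
  have hN : N = (2/h) • (S⁻¹ * (W * Q) * S⁻¹) := rfl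
  have h𝒜 : 𝒜 = S⁻¹ * (W * B) * S⁻¹ := rfl
  have hβ : β = (S⁻¹ * (W * S)) *ᵥ b := rfl
  have hG : G = (1 + (θ * h / 2) • (V * A))⁻¹ * (1 - ((1 - θ) * h / 2) • (V * A)) := rfl
  have hSig : Sig = h • ((1 + (θ * h / 2) • (V * A))⁻¹ * V * (1 + (θ * h / 2) • (A * V))⁻¹) := rfl
  -- basic facts about S
  have hSq : S * S = V := by
    have hsp := hV.posSemidef.1.spectral_theorem
    conv_rhs => rw [hsp]
    simp only [S, Matrix.PosSemidef.sqrt, Unitary.conjStarAlgAut_apply]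
    have hu : (star hV.posSemidef.1.eigenvectorUnitary : Matrix (Fin d) (Fin d) ℝ) *
        hV.posSemidef.1.eigenvectorUnitary.1 = 1 := Matrix.UnitaryGroup.star_mul_self _
    rw [show ∀ X Y Z : Matrix (Fin d) (Fin d) ℝ, X * Y * Z * (X * Y * Z) = X * (Y * (Z * X) * Y) * Z
      from fun X Y Z => by simp only [Matrix.mul_assoc], hu, Matrix.mul_one, diagonal_mul_diagonal]
    congr 3
    funext i
    simp only [Function.comp_apply, RCLike.ofReal_real_eq_id, id]
    exact Real.mul_self_sqrt (hV.posSemidef.eigenvalues_nonneg i)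
  have hSs : Sᵀ = S := by
    simp only [S, Matrix.PosSemidef.sqrt, Matrix.transpose_mul, Matrix.diagonal_transpose,
      Matrix.star_eq_conjTranspose, Matrix.conjTranspose_eq_transpose_of_trivial,
      Matrix.transpose_transpose, Matrix.mul_assoc]
  have hAs : Aᵀ = A := by
    have := hA.isHermitian
    rwa [Matrix.IsHermitian, Matrix.conjTranspose_eq_transpose_of_trivial] at this
  have hSu : IsUnit S.det := by
    have h1 : S.det * S.det = V.det := by rw [← Matrix.det_mul, hSq]
    have h2 : V.det ≠ 0 := ne_of_gt hV.det_pos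
    exact isUnit_iff_ne_zero.mpr (fun hz => h2 (by rw [← h1, hz, zero_mul]))
  have hSS' : S * S⁻¹ = 1 := Matrix.mul_nonsing_inv _ hSu
  have hS'S : S⁻¹ * S = 1 := Matrix.nonsing_inv_mul _ hSu
  have hWW' : W * W⁻¹ = 1 := Matrix.mul_nonsing_inv _ hWu
  have hW'W : W⁻¹ * W = 1 := Matrix.nonsing_inv_mul _ hWu
  have hPP' : P * P⁻¹ = 1 := Matrix.mul_nonsing_inv _ hU
  have hP'P : P⁻¹ * P = 1 := Matrix.nonsing_inv_mul _ hU
  -- cancellation helpers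
  have cS : ∀ X : Matrix (Fin d) (Fin d) ℝ, S * (S⁻¹ * X) = X := fun X => by
    rw [← Matrix.mul_assoc, hSS', Matrix.one_mul]
  have cS' : ∀ X : Matrix (Fin d) (Fin d) ℝ, S⁻¹ * (S * X) = X := fun X => by
    rw [← Matrix.mul_assoc, hS'S, Matrix.one_mul]
  have cW : ∀ X : Matrix (Fin d) (Fin d) ℝ, W * (W⁻¹ * X) = X := fun X => by
    rw [← Matrix.mul_assoc, hWW', Matrix.one_mul]
  have cW' : ∀ X : Matrix (Fin d) (Fin d) ℝ, W⁻¹ * (W * X) = X := fun X => by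
    rw [← Matrix.mul_assoc, hW'W, Matrix.one_mul]
  have cP : ∀ X : Matrix (Fin d) (Fin d) ℝ, P * (P⁻¹ * X) = X := fun X => by
    rw [← Matrix.mul_assoc, hPP', Matrix.one_mul]
  have cP' : ∀ X : Matrix (Fin d) (Fin d) ℝ, P⁻¹ * (P * X) = X := fun X => by
    rw [← Matrix.mul_assoc, hP'P, Matrix.one_mul]
  -- symmetry of the building blocks
  have hBs : Bᵀ = B := by
    rw [hB, Matrix.transpose_mul, Matrix.transpose_mul, hSs, hAs, Matrix.mul_assoc]
  have hWs : Wᵀ = W := by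
    rw [hW0, Matrix.transpose_add, Matrix.transpose_one, Matrix.transpose_smul, hBs]
  have hPs : Pᵀ = P := by
    rw [hPdef, Matrix.transpose_add, Matrix.transpose_one, Matrix.transpose_smul, hBs]
  have hQs : Qᵀ = Q := by
    rw [hQdef, Matrix.transpose_sub, Matrix.transpose_one, Matrix.transpose_smul, hBs]
  have hPis : P⁻¹ᵀ = P⁻¹ := by rw [Matrix.transpose_nonsing_inv, hPs]
  -- conjugation identities
  have conjP : (1 : Matrix (Fin d) (Fin d) ℝ) + (θ * h / 2) • (V * A) = S * (P * S⁻¹) := by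
    simp only [hPdef, hB, Matrix.add_mul, Matrix.mul_add, Matrix.one_mul, Matrix.mul_one,
      smul_mul_assoc, mul_smul_comm, Matrix.mul_assoc, hSS', cS, cS', ← hSq]
  have conjQ : (1 : Matrix (Fin d) (Fin d) ℝ) - ((1 - θ) * h / 2) • (V * A) = S * (Q * S⁻¹) := by
    simp only [hQdef, hB, Matrix.sub_mul, Matrix.mul_sub, Matrix.one_mul, Matrix.mul_one,
      smul_mul_assoc, mul_smul_comm, Matrix.mul_assoc, hSS', cS, cS', ← hSq]
  have conjPA : (1 : Matrix (Fin d) (Fin d) ℝ) + (θ * h / 2) • (A * V) = S⁻¹ * (P * S) := by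
    simp only [hPdef, hB, Matrix.add_mul, Matrix.mul_add, Matrix.one_mul, Matrix.mul_one,
      smul_mul_assoc, mul_smul_comm, Matrix.mul_assoc, hS'S, cS, cS', ← hSq]
  have hVAinv : ((1 : Matrix (Fin d) (Fin d) ℝ) + (θ * h / 2) • (V * A))⁻¹
      = S * (P⁻¹ * S⁻¹) := by
    apply Matrix.inv_eq_right_inv
    rw [conjP]
    simp only [Matrix.mul_assoc, cS, cS', cP, cP']
    exact hSS'
  have hAVinv : ((1 : Matrix (Fin d) (Fin d) ℝ) + (θ * h / 2) • (A * V))⁻¹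
      = S⁻¹ * (P⁻¹ * S) := by
    apply Matrix.inv_eq_right_inv
    rw [conjPA]
    simp only [Matrix.mul_assoc, cS, cS', cP, cP']
    exact hS'S
  have hMinv : M⁻¹ = (h/2) • (S * (P⁻¹ * (W⁻¹ * S))) := by
    apply Matrix.inv_eq_right_inv
    rw [hM]
    simp only [smul_mul_assoc, mul_smul_comm, smul_smul, Matrix.mul_assoc, cS, cS', cP, cP',
      cW, cW']
    rw [show h / 2 * (2 / h) = (1:ℝ) by field_simp, one_smul]
    exact hS'S
  -- commutation of P and Q
  have hPQ : P * Q = Q * P := by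
    simp only [hPdef, hQdef, Matrix.mul_sub, Matrix.sub_mul, Matrix.mul_add, Matrix.add_mul,
      Matrix.one_mul, Matrix.mul_one, smul_mul_assoc, mul_smul_comm, smul_smul]
    module
  have hQPi : Q * P⁻¹ = P⁻¹ * Q := by
    calc Q * P⁻¹ = P⁻¹ * (P * (Q * P⁻¹)) := by rw [cP']
    _ = P⁻¹ * (Q * (P * P⁻¹)) := by rw [← Matrix.mul_assoc P Q, hPQ, Matrix.mul_assoc]
    _ = P⁻¹ * Q := by rw [hPP', Matrix.mul_one]
  have cQP : ∀ X : Matrix (Fin d) (Fin d) ℝ, Q * (P⁻¹ * X) = P⁻¹ * (Q * X) := fun X => by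
    rw [← Matrix.mul_assoc, hQPi, Matrix.mul_assoc]
  refine ⟨?_, ?_, ?_, ?_, ?_, ?_, ?_, ?_⟩
  · -- M - N = 𝒜
    rw [hM, hN, h𝒜, ← smul_sub, ← Matrix.sub_mul, ← Matrix.mul_sub, ← Matrix.mul_sub]
    have hPQ2 : P - Q = (h/2) • B := by
      rw [hPdef, hQdef]; module
    rw [hPQ2, mul_smul_comm, mul_smul_comm, smul_mul_assoc, smul_smul,
      show (2/h) * (h/2) = (1:ℝ) by field_simp, one_smul]
  · -- 𝒜 = Wt * A
    rw [h𝒜, hWt, hW0, hB]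
    simp only [Matrix.add_mul, Matrix.mul_add, Matrix.one_mul, Matrix.mul_one,
      smul_mul_assoc, mul_smul_comm, Matrix.mul_assoc, hSS', hS'S, cS, cS', ← hSq]
  · -- β = Wt *ᵥ b
    rw [hβ, hWt]
    congr 1
    rw [hW0, hB]
    simp only [Matrix.add_mul, Matrix.mul_add, Matrix.one_mul, Matrix.mul_one,
      smul_mul_assoc, mul_smul_comm, Matrix.mul_assoc, hSS', hS'S, cS, cS', ← hSq]
  · -- IsUnit M.det
    rw [hM]
    rw [Matrix.det_smul, Matrix.det_mul, Matrix.det_mul]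
    refine (isUnit_iff_ne_zero.mpr ?_)
    have h1 : (S⁻¹).det ≠ 0 := ((Matrix.isUnit_nonsing_inv_det S hSu)).ne_zero
    exact mul_ne_zero (pow_ne_zero _ (div_ne_zero two_ne_zero hh'))
      (mul_ne_zero (mul_ne_zero h1
        (by rw [Matrix.det_mul]; exact mul_ne_zero hWu.ne_zero hU.ne_zero)) h1)
  · -- M⁻¹ * N = G
    rw [hMinv, hN, hG, hVAinv, conjQ]
    simp only [smul_mul_assoc, mul_smul_comm, smul_smul, Matrix.mul_assoc, cS, cS', cW, cW',
      cP, cP']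
    rw [show 2 / h * (h / 2) = (1:ℝ) by field_simp, one_smul]
  · -- M⁻¹ *ᵥ β
    rw [hMinv, hβ, hVAinv]
    simp only [Matrix.mulVec_mulVec, Matrix.smul_mulVec, smul_mul_assoc,
      Matrix.mul_assoc, cS, cS', cW, cW', ← hSq]
  · -- covariance identity
    have hMT : Mᵀ = (2/h) • (S⁻¹ * (P * W) * S⁻¹) := by
      rw [hM, Matrix.transpose_smul, Matrix.transpose_mul, Matrix.transpose_mul,
        Matrix.transpose_nonsing_inv, hSs, Matrix.transpose_mul, hWs, hPs, Matrix.mul_assoc]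
      simp only [Matrix.mul_assoc]
    have hWis : W⁻¹ᵀ = W⁻¹ := by rw [Matrix.transpose_nonsing_inv, hWs]
    have hPWQ : P * W + W * Q = (2:ℝ) • (W * W) := by
      simp only [hPdef, hQdef, hW0, Matrix.mul_sub, Matrix.sub_mul, Matrix.mul_add,
        Matrix.add_mul, Matrix.one_mul, Matrix.mul_one, smul_mul_assoc, mul_smul_comm,
        smul_smul]
      module
    rw [hMT, hN, hMinv, hSig, hVAinv, hAVinv]
    rw [← smul_add, ← Matrix.add_mul, ← Matrix.mul_add, hPWQ]
    simp only [Matrix.transpose_smul, Matrix.transpose_mul, hSs, hPis, hWis,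
      smul_mul_assoc, mul_smul_comm, smul_smul, Matrix.mul_assoc, cS, cS', cW, cW',
      cP, cP', ← hSq]
    match_scalars
    field_simp
  · -- symmetry of G * Sig
    have hGX : G = S * (P⁻¹ * (Q * S⁻¹)) := by
      rw [hG, hVAinv, conjQ]
      simp only [Matrix.mul_assoc, cS, cS']
    have hSigX : Sig = h • (S * (P⁻¹ * (P⁻¹ * S))) := by
      rw [hSig, hVAinv, hAVinv]
      simp only [Matrix.mul_assoc, cS, cS', ← hSq]
    show (G * Sig)ᵀ = G * Sig
    rw [hGX, hSigX]
    simp only [mul_smul_comm, smul_mul_assoc, Matrix.mul_assoc, cS, cS',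
      Matrix.transpose_smul, Matrix.transpose_mul, hSs, hPis, hQs,
      Matrix.transpose_nonsing_inv]
    simp only [cQP]
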